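/- Let x be an infinite word having only finitely many abelian unbordered factors. Then x has bounded abelian complexity: there exists N such that for every n ≥ 1, the number of abelian equivalence classes of factors of x of length n is at most N. -/

import Mathlib

def factor {α : Type*} (w : ℕ → α) (i n : ℕ) : List α :=
  (List.range n).map (fun k => w (i + k))

def IsFactor {α : Type*} (u : List α) (w : ℕ → α) : Prop :=
  ∃ i, factor w i u.length = u

def AbelianEquiv {α : Type*} [DecidableEq α] (u v : List α) : Prop :=
  ∀ a : α, u.count a = v.count a

def AbelianBordered {α : Type*} [DecidableEq α] (u : List α) : Prop :=
  ∃ p s : List α, p <+: u ∧ s <:+ u ∧ p ≠ [] ∧ p.length < u.length ∧ AbelianEquiv p s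

/-- The set of Parikh vectors of factors of `x` of length `n`. -/
def ParikhVectors {α : Type*} [DecidableEq α] (x : ℕ → α) (n : ℕ) : Set (α → ℕ) :=
  {f | ∃ u : List α, IsFactor u x ∧ u.length = n ∧ ∀ a, u.count a = f a}

section Aux

set_option linter.unusedSectionVars false

variable {α : Type*} [DecidableEq α] [Fintype α]

lemma factor_length (w : ℕ → α) (i n : ℕ) : (factor w i n).length = n := by
  simp [factor]

lemma factor_add (w : ℕ → α) (i n m : ℕ) :
    factor w i (n + m) = factor w i n ++ factor w (i + n) m := by
  unfold factor
  rw [List.range_add, List.map_append, List.map_map]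
  congr 1
  simp [Function.comp_def, add_assoc]

/-- Prefix count function, `ℤ`-valued. -/
def phi (x : ℕ → α) (m : ℕ) (a : α) : ℤ := ((factor x 0 m).count a : ℤ)

lemma count_factor_eq (x : ℕ → α) (i n : ℕ) (a : α) :
    ((factor x i n).count a : ℤ) = phi x (i + n) a - phi x i a := by
  have h : factor x 0 (i + n) = factor x 0 i ++ factor x i n := by
    have := factor_add x 0 i n; simpa using this
  unfold phi
  rw [h, List.count_append]
  push_cast; ring

lemma phi_lip (x : ℕ → α) {p q : ℕ} (h : p ≤ q) (a : α) :
    0 ≤ phi x q a - phi x p a ∧ phi x q a - phi x p a ≤ ((q - p : ℕ) : ℤ) := by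
  have hq : q = p + (q - p) := by omega
  have hc := count_factor_eq x p (q - p) a
  rw [← hq] at hc
  constructor
  · rw [← hc]; exact_mod_cast Nat.zero_le _
  · rw [← hc]
    have h2 : (factor x p (q - p)).count a ≤ (factor x p (q - p)).length :=
      List.count_le_length
    rw [factor_length] at h2; exact_mod_cast h2

lemma length_eq_sum (l : List α) : l.length = ∑ a ∈ Finset.univ, l.count a := by
  induction l with
  | nil => simp
  | cons b t ih =>
    simp only [List.count_cons, List.length_cons, Finset.sum_add_distrib, ← ih]
    simp

lemma exists_abelian_border {x : ℕ → α} {i n : ℕ}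
    (hb : AbelianBordered (factor x i n)) :
    ∃ k, 0 < k ∧ k < n ∧
      ∀ a, phi x (i + k) a + phi x (i + (n - k)) a = phi x i a + phi x (i + n) a := by
  obtain ⟨p, s, hp, hs, hpne, hplen, hab⟩ := hb
  set u := factor x i n with hu
  have hulen : u.length = n := factor_length x i n
  set k := p.length with hk
  have hslen : s.length = k := by
    rw [length_eq_sum (α := α) s, hk, length_eq_sum (α := α) p]
    exact Finset.sum_congr rfl (fun a _ => (hab a).symm)
  have hkn : k < n := by rw [hulen] at hplen; exact hplen
  have hkpos : 0 < k := List.length_pos_iff.mpr hpne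
  have hdecomp1 : u = factor x i k ++ factor x (i + k) (n - k) := by
    rw [hu, ← factor_add]
    congr 1; omega
  have hpeq : p = factor x i k := by
    have h1 : p = u.take k := by
      have := List.prefix_iff_eq_take.mp hp
      rwa [← hk] at this
    rw [h1, hdecomp1, List.take_left' (factor_length x i k)]
  have hdecomp2 : u = factor x i (n - k) ++ factor x (i + (n - k)) k := by
    rw [hu, ← factor_add]
    congr 1; omega
  have hseq : s = factor x (i + (n - k)) k := by
    have h1 : s = u.drop (u.length - s.length) := List.suffix_iff_eq_drop.mp hs
    rw [hulen, hslen] at h1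
    rw [h1, hdecomp2, List.drop_left' (factor_length x i (n - k))]
  refine ⟨k, hkpos, hkn, fun a => ?_⟩
  have hcount : ((factor x i k).count a : ℤ) = ((factor x (i + (n - k)) k).count a : ℤ) := by
    rw [← hpeq, ← hseq]; exact_mod_cast hab a
  have e1 := count_factor_eq x i k a
  have e2 := count_factor_eq x (i + (n - k)) k a
  have hnk : i + (n - k) + k = i + n := by omega
  rw [hnk] at e2
  rw [e1, e2] at hcount
  linarith

/-- Iterated border shrinking: any pair of positions can be replaced by a close pair
on the same anti-diagonal with the same `phi`-sum. -/
lemma lemA {x : ℕ → α} {L : ℕ}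
    (key : ∀ i n, L ≤ n → ∃ k, 0 < k ∧ k < n ∧
      ∀ a, phi x (i + k) a + phi x (i + (n - k)) a = phi x i a + phi x (i + n) a) :
    ∀ d u v, u ≤ v → v - u = d →
      ∃ m m', m ≤ m' ∧ m' - m < L ∧ m + m' = u + v ∧
        ∀ a, phi x m a + phi x m' a = phi x u a + phi x v a := by
  intro d
  induction d using Nat.strong_induction_on with
  | _ d ih =>
    intro u v huv hd
    by_cases hdL : d < L
    · exact ⟨u, v, huv, by omega, rfl, fun a => rfl⟩
    · push_neg at hdL
      obtain ⟨k, hk0, hkn, heq⟩ := key u (v - u) (by omega)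
      have hv : u + (v - u) = v := by omega
      rw [hv] at heq
      set m0 := u + min k (v - u - k) with hm0
      set m0' := u + max k (v - u - k) with hm0'
      have hsum0 : ∀ a, phi x m0 a + phi x m0' a = phi x u a + phi x v a := by
        intro a
        have h1 := heq a
        rcases le_total k (v - u - k) with hc | hc
        · rw [hm0, hm0', min_eq_left hc, max_eq_right hc]; linarith
        · rw [hm0, hm0', min_eq_right hc, max_eq_left hc]; linarith
      obtain ⟨m, m', h1, h2, h3, h4⟩ := ih (m0' - m0) (by omega) m0 m0' (by omega) rfl
      exact ⟨m, m', h1, h2, by omega, fun a => (h4 a).trans (hsum0 a)⟩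

/-- 2L-balancedness of counts. -/
lemma bal {x : ℕ → α} {L : ℕ}
    (lem : ∀ u v, u ≤ v → ∃ m m', m ≤ m' ∧ m' - m < L ∧ m + m' = u + v ∧
      ∀ a, phi x m a + phi x m' a = phi x u a + phi x v a)
    (i n : ℕ) (a : α) :
    |((factor x i n).count a : ℤ) - ((factor x 0 n).count a : ℤ)| ≤ 2 * L := by
  obtain ⟨m1, m1', h11, h12, h13, h14⟩ := lem 0 (i + n) (Nat.zero_le _)
  rw [Nat.zero_add] at h13
  have E2 : ∃ m2 m2', m2 ≤ m2' ∧ m2' - m2 < L ∧ m2 + m2' = i + n ∧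
      ∀ a, phi x m2 a + phi x m2' a = phi x i a + phi x n a := by
    rcases le_total i n with hc | hc
    · obtain ⟨m2, m2', g1, g2, g3, g4⟩ := lem i n hc
      exact ⟨m2, m2', g1, g2, by omega, g4⟩
    · obtain ⟨m2, m2', g1, g2, g3, g4⟩ := lem n i hc
      exact ⟨m2, m2', g1, g2, by omega, fun a => (g4 a).trans (by ring)⟩
  obtain ⟨m2, m2', h21, h22, h23, h24⟩ := E2
  have lip : ∀ p q : ℕ, p ≤ q + L → q ≤ p + L → |phi x p a - phi x q a| ≤ (L : ℤ) := by
    intro p q hpq hqp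
    rcases le_total p q with hc | hc
    · obtain ⟨l1, l2⟩ := phi_lip x hc a
      have : ((q - p : ℕ) : ℤ) ≤ (L : ℤ) := by omega
      rw [abs_le]; constructor <;> linarith
    · obtain ⟨l1, l2⟩ := phi_lip x hc a
      have : ((p - q : ℕ) : ℤ) ≤ (L : ℤ) := by omega
      rw [abs_le]; constructor <;> linarith
  have b1 : |phi x m1 a - phi x m2 a| ≤ (L : ℤ) := lip m1 m2 (by omega) (by omega)
  have b2 : |phi x m1' a - phi x m2' a| ≤ (L : ℤ) := lip m1' m2' (by omega) (by omega)
  have target_eq : ((factor x i n).count a : ℤ) - ((factor x 0 n).count a : ℤ) =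
      (phi x m1 a - phi x m2 a) + (phi x m1' a - phi x m2' a) := by
    have c1 := count_factor_eq x i n a
    have c2 := count_factor_eq x 0 n a
    rw [Nat.zero_add] at c2
    have h14a := h14 a
    have h24a := h24 a
    rw [c1, c2]
    linarith
  rw [target_eq]
  calc |(phi x m1 a - phi x m2 a) + (phi x m1' a - phi x m2' a)|
      ≤ |phi x m1 a - phi x m2 a| + |phi x m1' a - phi x m2' a| := abs_add_le _ _
    _ ≤ 2 * L := by linarith

end Aux

/-- A word with finitely many abelian unbordered factors has bounded abelian complexity. -/
theorem stmt_18 {α : Type*} [DecidableEq α] [Fintype α] (x : ℕ → α)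
    (h : {u : List α | IsFactor u x ∧ ¬ AbelianBordered u}.Finite) :
    ∃ N : ℕ, ∀ n : ℕ, 1 ≤ n →
      (ParikhVectors x n).Finite ∧ (ParikhVectors x n).ncard ≤ N := by
  classical
  set M := h.toFinset.sup List.length with hM
  set L := M + 1 with hL
  have key : ∀ i n, L ≤ n → ∃ k, 0 < k ∧ k < n ∧
      ∀ a, phi x (i + k) a + phi x (i + (n - k)) a = phi x i a + phi x (i + n) a := by
    intro i n hn
    have hfac : IsFactor (factor x i n) x := ⟨i, by rw [factor_length]⟩
    have hb : AbelianBordered (factor x i n) := by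
      by_contra hnb
      have hmem : factor x i n ∈ h.toFinset := by
        rw [Set.Finite.mem_toFinset]; exact ⟨hfac, hnb⟩
      have hle := Finset.le_sup (f := List.length) hmem
      rw [factor_length] at hle
      omega
    exact exists_abelian_border hb
  have lem : ∀ u v, u ≤ v → ∃ m m', m ≤ m' ∧ m' - m < L ∧ m + m' = u + v ∧
      ∀ a, phi x m a + phi x m' a = phi x u a + phi x v a :=
    fun u v huv => lemA key (v - u) u v huv rfl
  refine ⟨Fintype.card (α → Fin (4 * L + 1)), fun n _ => ?_⟩
  set T : Set (α → ℕ) :=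
    {f | ∀ a, f a ≤ (factor x 0 n).count a + 2 * L ∧ (factor x 0 n).count a ≤ f a + 2 * L}
    with hT
  have hsub : ParikhVectors x n ⊆ T := by
    rintro f ⟨u, ⟨j, hfac⟩, hlen, hcount⟩
    have hu : u = factor x j n := by rw [← hfac, hlen]
    intro a
    have hb := bal lem j n a
    have hfa : (factor x j n).count a = f a := by rw [← hu]; exact hcount a
    rw [hfa, abs_le] at hb
    obtain ⟨hb1, hb2⟩ := hb
    constructor <;> [skip; skip] <;> omega
  set emb : (α → ℕ) → (α → Fin (4 * L + 1)) :=
    fun f a => ⟨min (f a + 2 * L - (factor x 0 n).count a) (4 * L), by omega⟩ with hemb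
  have hinj : Set.InjOn emb T := by
    intro f hf g hg hfg
    funext a
    have hfa := hf a
    have hga := hg a
    have heq : (emb f a).val = (emb g a).val := by rw [hfg]
    simp only [hemb] at heq
    omega
  have hTfin : T.Finite := Set.Finite.of_finite_image (Set.toFinite _) hinj
  have h1 : (ParikhVectors x n).ncard ≤ T.ncard := Set.ncard_le_ncard hsub hTfin
  have h2 : T.ncard = (emb '' T).ncard := (Set.ncard_image_of_injOn hinj).symm
  have h3 : (emb '' T).ncard ≤ (Set.univ : Set (α → Fin (4 * L + 1))).ncard :=
    Set.ncard_le_ncard (Set.subset_univ _) Set.finite_univ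
  have h4 : (Set.univ : Set (α → Fin (4 * L + 1))).ncard = Fintype.card (α → Fin (4 * L + 1)) := by
    rw [Set.ncard_univ, Nat.card_eq_fintype_card]
  exact ⟨hTfin.subset hsub, by omega⟩
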